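/- Let γ be a closed C² curve in ℝ³ of length 2π parametrized by arclength with curvature κ(s). Let U(s) be its unit tangent and suppose each component of U vanishes at least once on [0, 2π]. Then for every 2π-periodic Φ ∈ H¹, ∫₀^{2π}(Φ'(s)² + κ(s)²Φ(s)²) ds ≥ (1/4)∫₀^{2π} Φ(s)² ds; i.e., the lowest eigenvalue of -d²/ds² + κ² is at least 1/4. -/

import Mathlib

open Real MeasureTheory intervalIntegral

open Filter Set
/-- derivative of a periodic function is periodic -/
lemma periodic_deriv_of_hasDerivAt {f f' : ℝ → ℝ} {T : ℝ}
    (hper : Function.Periodic f T) (hd : ∀ s, HasDerivAt f (f' s) s) :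
    Function.Periodic f' T := by
  intro s
  have h2 : HasDerivAt (fun t => f (t + T)) (f' (s + T) * 1) s :=
    (hd (s + T)).comp s ((hasDerivAt_id s).add_const T)
  have hfe : (fun t => f (t + T)) = f := funext fun t => hper t
  rw [hfe, mul_one] at h2
  exact h2.unique (hd s)

/-- integrability from square-integrability -/
lemma intInt_of_sq {f' : ℝ → ℝ} {a b : ℝ}
    (hm : AEStronglyMeasurable f' (volume.restrict (Set.uIoc a b)))
    (h : IntervalIntegrable (fun s => f' s ^ 2) volume a b) :
    IntervalIntegrable f' volume a b := by
  refine (h.add (_root_.intervalIntegrable_const (c := (1:ℝ)))).mono_fun hm ?_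
  filter_upwards with x
  show ‖f' x‖ ≤ ‖f' x ^ 2 + 1‖
  rw [Real.norm_eq_abs, Real.norm_eq_abs, abs_of_nonneg (by positivity : (0:ℝ) ≤ f' x ^ 2 + 1)]
  nlinarith [sq_nonneg (|f' x| - 1), sq_abs (f' x)]

/-- boundary-limit helper -/
lemma tendsto_mul_sq_zero {f g : ℝ → ℝ} {p d L : ℝ}
    (hf : HasDerivAt f d p) (h0 : f p = 0)
    (hg : Filter.Tendsto (fun t => g t * (t - p)) (nhdsWithin p {p}ᶜ) (nhds L)) :
    Filter.Tendsto (fun t => g t * f t ^ 2) (nhdsWithin p {p}ᶜ) (nhds 0) := by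
  have hs : Filter.Tendsto (slope f p) (nhdsWithin p {p}ᶜ) (nhds d) :=
    hasDerivAt_iff_tendsto_slope.mp hf
  have hid : Filter.Tendsto (fun t : ℝ => t - p) (nhdsWithin p {p}ᶜ) (nhds 0) := by
    have : Filter.Tendsto (fun t : ℝ => t - p) (nhds p) (nhds (p - p)) :=
      (continuous_id.sub continuous_const).tendsto p
    rw [sub_self] at this
    exact this.mono_left nhdsWithin_le_nhds
  have key : Filter.Tendsto (fun t => (g t * (t - p)) * (slope f p t) ^ 2 * (t - p))
      (nhdsWithin p {p}ᶜ) (nhds (L * d ^ 2 * 0)) := (hg.mul (hs.pow 2)).mul hid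
  rw [mul_zero] at key
  refine key.congr' ?_
  filter_upwards [self_mem_nhdsWithin] with t (ht : t ∈ ({p}ᶜ : Set ℝ))
  have htp : t - p ≠ 0 := sub_ne_zero.mpr ht
  rw [slope_def_field, h0, sub_zero]
  field_simp

noncomputable def ctf : ℝ → ℝ := fun t => Real.cos (t / 2) / (2 * Real.sin (t / 2))

lemma tendsto_half_punctured {p : ℝ} :
    Filter.Tendsto (fun t : ℝ => t / 2) (nhdsWithin p {p}ᶜ)
      (nhdsWithin (p / 2) {p / 2}ᶜ) := by
  rw [tendsto_nhdsWithin_iff]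
  constructor
  · exact ((continuous_id.div_const (2:ℝ)).tendsto p).mono_left nhdsWithin_le_nhds
  · filter_upwards [self_mem_nhdsWithin] with t (ht : t ∈ ({p}ᶜ : Set ℝ))
    simp only [Set.mem_compl_iff, Set.mem_singleton_iff] at ht ⊢
    intro h; exact ht (by linarith)

lemma tendsto_ctf_zero :
    Filter.Tendsto (fun t => ctf t * (t - 0)) (nhdsWithin 0 {(0:ℝ)}ᶜ) (nhds 1) := by
  have hslope : Filter.Tendsto (slope Real.sin 0) (nhdsWithin 0 {(0:ℝ)}ᶜ) (nhds 1) := by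
    have := hasDerivAt_iff_tendsto_slope.mp (Real.hasDerivAt_sin 0)
    simpa using this
  have hhalf := tendsto_half_punctured (p := (0:ℝ))
  rw [zero_div] at hhalf
  have hden : Filter.Tendsto (fun t : ℝ => Real.sin (t / 2) / (t / 2))
      (nhdsWithin 0 {(0:ℝ)}ᶜ) (nhds 1) := by
    have := hslope.comp hhalf
    refine this.congr fun t => ?_
    simp [Function.comp, slope_def_field]
  have hcos : Filter.Tendsto (fun t : ℝ => Real.cos (t / 2)) (nhdsWithin 0 {(0:ℝ)}ᶜ)
      (nhds 1) := by
    have : Filter.Tendsto (fun t : ℝ => Real.cos (t / 2)) (nhds 0) (nhds (Real.cos (0 / 2))) :=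
      (Real.continuous_cos.comp (continuous_id.div_const 2)).tendsto 0
    simp only [zero_div, Real.cos_zero] at this
    exact this.mono_left nhdsWithin_le_nhds
  have key := hcos.div hden one_ne_zero
  rw [div_one] at key
  refine key.congr' ?_
  filter_upwards [self_mem_nhdsWithin] with t (ht : t ∈ ({(0:ℝ)}ᶜ : Set ℝ))
  have ht0 : t ≠ 0 := by simpa using ht
  show Real.cos (t / 2) / (Real.sin (t / 2) / (t / 2)) = ctf t * (t - 0)
  unfold ctf
  rw [sub_zero]
  rcases eq_or_ne (Real.sin (t / 2)) 0 with h | h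
  · simp [h]
  · rw [div_div_eq_mul_div, div_mul_eq_mul_div,
      div_eq_div_iff h (mul_ne_zero two_ne_zero h)]
    ring

lemma tendsto_ctf_two_pi :
    Filter.Tendsto (fun t => ctf t * (t - 2 * π)) (nhdsWithin (2 * π) {(2*π:ℝ)}ᶜ)
      (nhds 1) := by
  have hslope : Filter.Tendsto (slope Real.sin π) (nhdsWithin π {(π:ℝ)}ᶜ) (nhds (-1)) := by
    have := hasDerivAt_iff_tendsto_slope.mp (Real.hasDerivAt_sin π)
    simpa using this
  have hhalf := tendsto_half_punctured (p := (2 * π : ℝ))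
  have h2 : (2 * π) / 2 = π := by ring
  rw [h2] at hhalf
  have hden : Filter.Tendsto (fun t : ℝ => Real.sin (t / 2) / (t / 2 - π))
      (nhdsWithin (2 * π) {(2*π:ℝ)}ᶜ) (nhds (-1)) := by
    have := hslope.comp hhalf
    refine this.congr fun t => ?_
    simp [Function.comp, slope_def_field]
  have hcos : Filter.Tendsto (fun t : ℝ => Real.cos (t / 2)) (nhdsWithin (2 * π) {(2*π:ℝ)}ᶜ)
      (nhds (-1)) := by
    have : Filter.Tendsto (fun t : ℝ => Real.cos (t / 2)) (nhds (2 * π))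
        (nhds (Real.cos ((2 * π) / 2))) :=
      (Real.continuous_cos.comp (continuous_id.div_const 2)).tendsto (2 * π)
    rw [h2, Real.cos_pi] at this
    exact this.mono_left nhdsWithin_le_nhds
  have key := hcos.div hden (by norm_num : (-1:ℝ) ≠ 0)
  rw [neg_div_neg_eq, div_one] at key
  refine key.congr' ?_
  filter_upwards [self_mem_nhdsWithin] with t (ht : t ∈ ({(2*π:ℝ)}ᶜ : Set ℝ))
  have ht0 : t - 2 * π ≠ 0 := sub_ne_zero.mpr (by simpa using ht)
  have ht1 : t / 2 - π ≠ 0 := fun h => ht0 (by linarith)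
  show Real.cos (t / 2) / (Real.sin (t / 2) / (t / 2 - π)) = ctf t * (t - 2 * π)
  unfold ctf
  rcases eq_or_ne (Real.sin (t / 2)) 0 with h | h
  · simp [h]
  · rw [div_div_eq_mul_div, div_mul_eq_mul_div,
      div_eq_div_iff h (mul_ne_zero two_ne_zero h)]
    ring

lemma core_wirtinger (f f' : ℝ → ℝ) (hd : ∀ s, HasDerivAt f (f' s) s)
    (hL2 : IntervalIntegrable (fun s => f' s ^ 2) volume 0 (2*π))
    (hint : IntervalIntegrable f' volume 0 (2*π))
    (h0 : f 0 = 0) (h2pi : f (2*π) = 0) :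
    (1/4) * ∫ s in (0:ℝ)..(2*π), f s ^ 2 ≤ ∫ s in (0:ℝ)..(2*π), f' s ^ 2 := by
  have hfc : Continuous f := by
    rw [continuous_iff_continuousAt]; exact fun x => (hd x).continuousAt
  have hπ := Real.pi_pos
  have h02 : (0:ℝ) ≤ 2*π := by positivity
  set F : ℝ → ℝ := fun t => f' t ^ 2 - 1/4 * f t ^ 2 with hFdef
  have hfsq_int : IntervalIntegrable (fun t => 1/4 * f t ^ 2) volume 0 (2*π) :=
    (continuous_const.mul (hfc.pow 2)).intervalIntegrable _ _
  have hFint : IntervalIntegrable F volume 0 (2*π) := hL2.sub hfsq_int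
  -- main estimate for every ε ∈ (0, π)
  have main : ∀ ε ∈ Set.Ioo (0:ℝ) π,
      ctf (2*π-ε) * f (2*π-ε) ^ 2 - ctf ε * f ε ^ 2 ≤ ∫ t in ε..(2*π-ε), F t := by
    intro ε hε
    obtain ⟨hε0, hεπ⟩ := hε
    have hle : ε ≤ 2*π - ε := by linarith
    have hsub : Set.uIcc ε (2*π-ε) ⊆ Set.uIcc 0 (2*π) := by
      rw [Set.uIcc_of_le hle, Set.uIcc_of_le h02]
      exact Set.Icc_subset_Icc (by linarith) (by linarith)
    have hsin : ∀ t ∈ Set.uIcc ε (2*π-ε), Real.sin (t/2) ≠ 0 := by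
      intro t ht
      rw [Set.uIcc_of_le hle] at ht
      have h1 : 0 < t/2 := by linarith [ht.1]
      have h2 : t/2 < π := by linarith [ht.2]
      exact ne_of_gt (Real.sin_pos_of_pos_of_lt_pi h1 h2)
    have hcC : ContinuousOn ctf (Set.uIcc ε (2*π-ε)) := by
      apply ContinuousOn.div
      · exact (Real.continuous_cos.comp (continuous_id.div_const 2)).continuousOn
      · exact (continuous_const.mul
          (Real.continuous_sin.comp (continuous_id.div_const 2))).continuousOn
      · intro t ht; exact mul_ne_zero two_ne_zero (hsin t ht)
    have hf'i : IntervalIntegrable f' volume ε (2*π-ε) := hint.mono_set hsub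
    have hsqi : IntervalIntegrable (fun t => f' t ^ 2) volume ε (2*π-ε) := hL2.mono_set hsub
    have hderivG : ∀ t ∈ Set.uIcc ε (2*π-ε),
        HasDerivAt (fun t => ctf t * f t ^ 2)
          ((-(1/4) - ctf t ^ 2) * f t ^ 2 + ctf t * (2 * f t ^ 1 * f' t)) t := by
      intro t ht
      have hs := hsin t ht
      have hcd : HasDerivAt ctf (-(1/4) - ctf t ^ 2) t := by
        have hhalf : HasDerivAt (fun t : ℝ => t/2) (1/2) t := (hasDerivAt_id t).div_const 2
        have h1 : HasDerivAt (fun t : ℝ => Real.cos (t/2)) (-Real.sin (t/2) * (1/2)) t :=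
          hhalf.cos
        have h2 : HasDerivAt (fun t : ℝ => 2 * Real.sin (t/2)) (2 * (Real.cos (t/2) * (1/2))) t :=
          hhalf.sin.const_mul 2
        have hq := h1.div h2 (mul_ne_zero two_ne_zero hs)
        refine hq.congr_deriv ?_
        have hpy := Real.sin_sq_add_cos_sq (t/2)
        unfold ctf
        field_simp
        nlinarith [hpy]
      exact hcd.mul ((hd t).pow 2)
    have hH : IntervalIntegrable
        (fun t => (-(1/4) - ctf t ^ 2) * f t ^ 2 + ctf t * (2 * f t ^ 1 * f' t))
        volume ε (2*π-ε) := by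
      have heq : (fun t => (-(1/4) - ctf t ^ 2) * f t ^ 2 + ctf t * (2 * f t ^ 1 * f' t))
          = fun t => (-(1/4) - ctf t ^ 2) * f t ^ 2 + f' t * (2 * ctf t * f t) :=
        funext fun t => by ring
      rw [heq]
      exact ((continuousOn_const.sub (hcC.pow 2)).mul
          (hfc.continuousOn.pow 2)).intervalIntegrable.add
        (hf'i.mul_continuousOn ((continuousOn_const.mul hcC).mul hfc.continuousOn))
    have hftc : ∫ t in ε..(2*π-ε),
          ((-(1/4) - ctf t ^ 2) * f t ^ 2 + ctf t * (2 * f t ^ 1 * f' t))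
        = ctf (2*π-ε) * f (2*π-ε) ^ 2 - ctf ε * f ε ^ 2 :=
      intervalIntegral.integral_eq_sub_of_hasDerivAt hderivG hH
    have hsq_int : IntervalIntegrable (fun t => (f' t - ctf t * f t) ^ 2) volume ε (2*π-ε) := by
      have heq : (fun t => (f' t - ctf t * f t) ^ 2)
          = fun t => f' t ^ 2 + f' t * (-(2) * ctf t * f t) + (ctf t * f t) ^ 2 :=
        funext fun t => by ring
      rw [heq]
      exact (hsqi.add
        (hf'i.mul_continuousOn ((continuousOn_const.mul hcC).mul hfc.continuousOn))).add
        ((hcC.mul hfc.continuousOn).pow 2).intervalIntegrable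
    have hFsplit : ∫ t in ε..(2*π-ε), F t
        = (∫ t in ε..(2*π-ε), (f' t - ctf t * f t) ^ 2)
          + ∫ t in ε..(2*π-ε),
              ((-(1/4) - ctf t ^ 2) * f t ^ 2 + ctf t * (2 * f t ^ 1 * f' t)) := by
      rw [← intervalIntegral.integral_add hsq_int hH]
      apply intervalIntegral.integral_congr
      intro t _
      simp only [hFdef]
      ring
    have hnn : 0 ≤ ∫ t in ε..(2*π-ε), (f' t - ctf t * f t) ^ 2 :=
      intervalIntegral.integral_nonneg hle (fun u _ => sq_nonneg _)
    rw [hFsplit, hftc]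
    linarith
  -- limit of the truncated integrals
  have hPc : ContinuousOn (fun x => ∫ t in (0:ℝ)..x, F t) (Set.uIcc 0 (2*π)) :=
    intervalIntegral.continuousOn_primitive_interval (by
      rw [Set.uIcc_of_le h02]
      exact (intervalIntegrable_iff_integrableOn_Icc_of_le h02).mp hFint)
  have hev_lt : ∀ᶠ ε : ℝ in nhdsWithin 0 (Set.Ioi 0), ε < π :=
    ((gt_mem_nhds hπ).filter_mono nhdsWithin_le_nhds)
  have hev_pos : ∀ᶠ ε : ℝ in nhdsWithin 0 (Set.Ioi 0), 0 < ε := self_mem_nhdsWithin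
  have t1 : Tendsto (fun ε : ℝ => 2*π - ε) (nhdsWithin 0 (Set.Ioi 0))
      (nhdsWithin (2*π) (Set.uIcc 0 (2*π))) := by
    rw [tendsto_nhdsWithin_iff]
    constructor
    · have : Tendsto (fun ε : ℝ => 2*π - ε) (nhds 0) (nhds (2*π - 0)) :=
        (continuous_const.sub continuous_id).tendsto 0
      rw [sub_zero] at this
      exact this.mono_left nhdsWithin_le_nhds
    · filter_upwards [hev_pos, hev_lt] with ε h1 h2
      rw [Set.uIcc_of_le h02]
      exact ⟨by linarith, by linarith⟩
  have t0 : Tendsto (fun ε : ℝ => ε) (nhdsWithin 0 (Set.Ioi 0))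
      (nhdsWithin 0 (Set.uIcc 0 (2*π))) := by
    rw [tendsto_nhdsWithin_iff]
    constructor
    · exact tendsto_id.mono_left nhdsWithin_le_nhds
    · filter_upwards [hev_pos, hev_lt] with ε h1 h2
      rw [Set.uIcc_of_le h02]
      exact ⟨le_of_lt h1, by linarith⟩
  have hmem2 : (2*π) ∈ Set.uIcc 0 (2*π) := by
    rw [Set.uIcc_of_le h02]; exact ⟨h02, le_rfl⟩
  have hmem0 : (0:ℝ) ∈ Set.uIcc 0 (2*π) := by
    rw [Set.uIcc_of_le h02]; exact ⟨le_rfl, h02⟩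
  have tP2 : Tendsto (fun ε => ∫ t in (0:ℝ)..(2*π-ε), F t) (nhdsWithin 0 (Set.Ioi 0))
      (nhds (∫ t in (0:ℝ)..(2*π), F t)) := (hPc (2*π) hmem2).tendsto.comp t1
  have tP0 : Tendsto (fun ε => ∫ t in (0:ℝ)..ε, F t) (nhdsWithin 0 (Set.Ioi 0))
      (nhds 0) := by
    have := (hPc 0 hmem0).tendsto.comp t0
    simpa [Function.comp_def] using this
  have hTF : Tendsto (fun ε => ∫ t in ε..(2*π-ε), F t) (nhdsWithin 0 (Set.Ioi 0))
      (nhds (∫ t in (0:ℝ)..(2*π), F t)) := by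
    have := tP2.sub tP0
    rw [sub_zero] at this
    refine this.congr' ?_
    filter_upwards [hev_pos, hev_lt] with ε h1 h2
    have hs1 : Set.uIcc 0 (2*π-ε) ⊆ Set.uIcc 0 (2*π) := by
      rw [Set.uIcc_of_le (by linarith), Set.uIcc_of_le h02]
      exact Set.Icc_subset_Icc le_rfl (by linarith)
    have hs2 : Set.uIcc 0 ε ⊆ Set.uIcc 0 (2*π) := by
      rw [Set.uIcc_of_le (le_of_lt h1), Set.uIcc_of_le h02]
      exact Set.Icc_subset_Icc le_rfl (by linarith)
    exact intervalIntegral.integral_interval_sub_left (hFint.mono_set hs1) (hFint.mono_set hs2)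
  -- limit of the boundary terms
  have hmono : nhdsWithin (0:ℝ) (Set.Ioi 0) ≤ nhdsWithin 0 {(0:ℝ)}ᶜ :=
    nhdsWithin_mono 0 (fun x hx => Set.mem_compl_singleton_iff.mpr (ne_of_gt hx))
  have b0 : Tendsto (fun ε => ctf ε * f ε ^ 2) (nhdsWithin 0 (Set.Ioi 0)) (nhds 0) :=
    (tendsto_mul_sq_zero (hd 0) h0 tendsto_ctf_zero).mono_left hmono
  have tcomp : Tendsto (fun ε : ℝ => 2*π - ε) (nhdsWithin 0 (Set.Ioi 0))
      (nhdsWithin (2*π) {(2*π:ℝ)}ᶜ) := by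
    rw [tendsto_nhdsWithin_iff]
    constructor
    · have : Tendsto (fun ε : ℝ => 2*π - ε) (nhds 0) (nhds (2*π - 0)) :=
        (continuous_const.sub continuous_id).tendsto 0
      rw [sub_zero] at this
      exact this.mono_left nhdsWithin_le_nhds
    · filter_upwards [hev_pos] with ε h1
      simp only [Set.mem_compl_iff, Set.mem_singleton_iff]
      intro h; linarith
  have b2 : Tendsto (fun ε => ctf (2*π-ε) * f (2*π-ε) ^ 2) (nhdsWithin 0 (Set.Ioi 0))
      (nhds 0) := (tendsto_mul_sq_zero (hd (2*π)) h2pi tendsto_ctf_two_pi).comp tcomp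
  have hTB : Tendsto (fun ε => ctf (2*π-ε) * f (2*π-ε) ^ 2 - ctf ε * f ε ^ 2)
      (nhdsWithin 0 (Set.Ioi 0)) (nhds 0) := by
    have := b2.sub b0; rwa [sub_zero] at this
  -- conclude
  have h0le : (0:ℝ) ≤ ∫ t in (0:ℝ)..(2*π), F t := by
    refine le_of_tendsto_of_tendsto hTB hTF ?_
    filter_upwards [hev_pos, hev_lt] with ε h1 h2
    exact main ε ⟨h1, h2⟩
  have hsplit : ∫ t in (0:ℝ)..(2*π), F t
      = (∫ t in (0:ℝ)..(2*π), f' t ^ 2) - ∫ t in (0:ℝ)..(2*π), 1/4 * f t ^ 2 :=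
    intervalIntegral.integral_sub hL2 hfsq_int
  have hconst : ∫ t in (0:ℝ)..(2*π), 1/4 * f t ^ 2
      = 1/4 * ∫ t in (0:ℝ)..(2*π), f t ^ 2 := by
    simpa using intervalIntegral.integral_const_mul (1/4 : ℝ) (fun t => f t ^ 2)
  rw [hsplit, hconst] at h0le
  linarith

lemma scalar_wirtinger (f f' : ℝ → ℝ)
    (hper : Function.Periodic f (2*π))
    (hd : ∀ s, HasDerivAt f (f' s) s)
    (hL2 : IntervalIntegrable (fun s => f' s ^ 2) volume 0 (2*π))
    (s₀ : ℝ) (hs₀ : s₀ ∈ Set.Icc (0:ℝ) (2*π)) (h0 : f s₀ = 0) :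
    (1/4) * ∫ s in (0:ℝ)..(2*π), f s ^ 2 ≤ ∫ s in (0:ℝ)..(2*π), f' s ^ 2 := by
  have hπ := Real.pi_pos
  have h02 : (0:ℝ) ≤ 2*π := by positivity
  have hf'eq : f' = deriv f := funext fun s => ((hd s).deriv).symm
  have hper' : Function.Periodic f' (2*π) := periodic_deriv_of_hasDerivAt hper hd
  have hpersq : Function.Periodic (fun s => f' s ^ 2) (2*π) := fun s => by
    simp [hper' s]
  have hperfsq : Function.Periodic (fun s => f s ^ 2) (2*π) := fun s => by
    simp [hper s]
  -- integrability of f'^2 on [s₀, s₀ + 2π]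
  have hsub1 : Set.uIcc s₀ (2*π) ⊆ Set.uIcc 0 (2*π) :=
    Set.uIcc_subset_uIcc (by rw [Set.uIcc_of_le h02]; exact hs₀)
      (by rw [Set.uIcc_of_le h02]; exact ⟨h02, le_rfl⟩)
  have hsub2 : Set.uIcc 0 s₀ ⊆ Set.uIcc 0 (2*π) :=
    Set.uIcc_subset_uIcc (by rw [Set.uIcc_of_le h02]; exact ⟨le_rfl, h02⟩)
      (by rw [Set.uIcc_of_le h02]; exact hs₀)
  have hright : IntervalIntegrable (fun s => f' s ^ 2) volume (2*π) (s₀ + 2*π) := by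
    have h1 : IntervalIntegrable (fun s => f' s ^ 2) volume 0 s₀ := hL2.mono_set hsub2
    have h2 := h1.comp_sub_right (2*π)
    have heq : (fun x => f' (x - 2*π) ^ 2) = fun x => f' x ^ 2 := funext fun x => by
      have := hper' (x - 2*π)
      rw [sub_add_cancel] at this
      rw [this]
    rw [heq] at h2
    simpa using h2
  have hshift : IntervalIntegrable (fun s => f' s ^ 2) volume s₀ (s₀ + 2*π) :=
    (hL2.mono_set hsub1).trans hright
  have hgsq : IntervalIntegrable (fun t => f' (s₀ + t) ^ 2) volume 0 (2*π) := by
    have := hshift.comp_add_left s₀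
    simpa using this
  -- the shifted function
  have hgd : ∀ t, HasDerivAt (fun t => f (s₀ + t)) (f' (s₀ + t)) t := by
    intro t
    have := (hd (s₀ + t)).comp t ((hasDerivAt_id t).const_add s₀)
    simpa [Function.comp_def] using this
  have hg0 : f (s₀ + 0) = 0 := by rw [add_zero]; exact h0
  have hg2 : f (s₀ + 2*π) = 0 := by rw [hper s₀]; exact h0
  have hgm : AEStronglyMeasurable (fun t => f' (s₀ + t))
      (volume.restrict (Set.uIoc 0 (2*π))) := by
    rw [hf'eq]
    exact ((measurable_deriv f).comp (measurable_const.add measurable_id)).aestronglyMeasurable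
  have hgint : IntervalIntegrable (fun t => f' (s₀ + t)) volume 0 (2*π) :=
    intInt_of_sq hgm hgsq
  have hcore := core_wirtinger (fun t => f (s₀ + t)) (fun t => f' (s₀ + t))
    hgd hgsq hgint hg0 hg2
  -- translate the integrals back
  have e1 : ∫ t in (0:ℝ)..(2*π), f (s₀ + t) ^ 2 = ∫ s in (0:ℝ)..(2*π), f s ^ 2 := by
    rw [intervalIntegral.integral_comp_add_left (fun s => f s ^ 2) s₀]
    have := hperfsq.intervalIntegral_add_eq s₀ 0
    simpa using this
  have e2 : ∫ t in (0:ℝ)..(2*π), f' (s₀ + t) ^ 2 = ∫ s in (0:ℝ)..(2*π), f' s ^ 2 := by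
    rw [intervalIntegral.integral_comp_add_left (fun s => f' s ^ 2) s₀]
    have := hpersq.intervalIntegral_add_eq s₀ 0
    simpa using this
  rw [e1, e2] at hcore
  exact hcore


/-- For a closed `C²` curve of length `2π` with unit tangent `U` (each component of
which vanishes somewhere) and curvature `κ = |U'|`, the lowest eigenvalue of
`-d²/ds² + κ²` on `2π`-periodic functions is at least `1/4`:
`∫ (Φ'² + κ²Φ²) ≥ (1/4)∫ Φ²` for every `2π`-periodic `H¹` function `Φ`. -/
theorem quarter_lower_bound
    (U : ℝ → EuclideanSpace ℝ (Fin 3)) (κ : ℝ → ℝ)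
    (hU : ContDiff ℝ 1 U) (hUper : Function.Periodic U (2 * π))
    (hunit : ∀ s, ‖U s‖ = 1)
    (hκ : ∀ s, κ s = ‖deriv U s‖)
    (hvanish : ∀ i : Fin 3, ∃ s ∈ Set.Icc (0:ℝ) (2 * π), U s i = 0)
    (Φ Φ' : ℝ → ℝ)
    (hΦper : Function.Periodic Φ (2 * π))
    (hΦderiv : ∀ s, HasDerivAt Φ (Φ' s) s)
    (hΦL2 : IntervalIntegrable (fun s => (Φ' s) ^ 2) volume 0 (2 * π)) :
    (∫ s in (0:ℝ)..(2 * π), ((Φ' s) ^ 2 + (κ s) ^ 2 * (Φ s) ^ 2)) ≥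
      (1/4) * ∫ s in (0:ℝ)..(2 * π), (Φ s) ^ 2 := by
  have hΦc : Continuous Φ := by
    rw [continuous_iff_continuousAt]; exact fun x => (hΦderiv x).continuousAt
  have hUd : ∀ s, HasDerivAt U (deriv U s) s := fun s =>
    ((hU.differentiable one_ne_zero) s).hasDerivAt
  have hud : ∀ (i : Fin 3) (s : ℝ), HasDerivAt (fun s => U s i) (deriv U s i) s := by
    intro i s
    have := (EuclideanSpace.proj (𝕜 := ℝ) i).hasFDerivAt.comp_hasDerivAt s (hUd s)
    simpa [Function.comp_def] using this
  have hucont : ∀ i : Fin 3, Continuous (fun s => U s i) := fun i => by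
    have := (EuclideanSpace.proj (𝕜 := ℝ) i).continuous.comp hU.continuous
    simpa [Function.comp_def] using this
  have hu'cont : ∀ i : Fin 3, Continuous (fun s => deriv U s i) := fun i => by
    have := (EuclideanSpace.proj (𝕜 := ℝ) i).continuous.comp (hU.continuous_deriv le_rfl)
    simpa [Function.comp_def] using this
  -- pointwise sums
  have hsum1 : ∀ s, ∑ i : Fin 3, (U s i) ^ 2 = 1 := by
    intro s
    have h := EuclideanSpace.norm_eq (U s)
    rw [hunit s] at h
    have h2 := (Real.sqrt_eq_one.mp h.symm)
    simpa [Real.norm_eq_abs, sq_abs] using h2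
  have hsum2 : ∀ s, ∑ i : Fin 3, (deriv U s i) ^ 2 = κ s ^ 2 := by
    intro s
    have h := EuclideanSpace.norm_eq (deriv U s)
    rw [← hκ s] at h
    have hnn : 0 ≤ ∑ i : Fin 3, ‖deriv U s i‖ ^ 2 :=
      Finset.sum_nonneg fun i _ => sq_nonneg _
    have : κ s ^ 2 = ∑ i : Fin 3, ‖deriv U s i‖ ^ 2 := by
      rw [h, Real.sq_sqrt hnn]
    simpa [Real.norm_eq_abs, sq_abs] using this.symm
  have hsum3 : ∀ s, ∑ i : Fin 3, U s i * deriv U s i = 0 := by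
    intro s
    have hD : HasDerivAt (fun s => ∑ i : Fin 3, (U s i) ^ 2)
        (∑ i : Fin 3, 2 * U s i ^ 1 * deriv U s i) s :=
      HasDerivAt.fun_sum fun i _ => by
        have := (hud i s).fun_pow 2
        simpa using this
    have hconst : (fun s => ∑ i : Fin 3, (U s i) ^ 2) = fun _ => (1:ℝ) :=
      funext fun s => hsum1 s
    rw [hconst] at hD
    have hz : (∑ i : Fin 3, 2 * U s i ^ 1 * deriv U s i) = 0 :=
      hD.unique (hasDerivAt_const s 1)
    have : (2:ℝ) * ∑ i : Fin 3, U s i * deriv U s i = 0 := by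
      rw [Finset.mul_sum]
      rw [← hz]
      apply Finset.sum_congr rfl
      intros; ring
    linarith
  -- componentwise functions
  set g : Fin 3 → ℝ → ℝ := fun i s => Φ s * U s i with hgdef
  set g' : Fin 3 → ℝ → ℝ := fun i s => Φ' s * U s i + Φ s * deriv U s i with hg'def
  have hΦ'm : AEStronglyMeasurable Φ' (volume.restrict (Set.uIoc 0 (2*π))) := by
    have : Φ' = deriv Φ := funext fun s => ((hΦderiv s).deriv).symm
    rw [this]
    exact (measurable_deriv Φ).aestronglyMeasurable
  have hΦ'int : IntervalIntegrable Φ' volume 0 (2*π) := intInt_of_sq hΦ'm hΦL2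
  have hgd : ∀ i s, HasDerivAt (g i) (g' i s) s := fun i s =>
    (hΦderiv s).mul (hud i s)
  have hg'sq_int : ∀ i, IntervalIntegrable (fun s => g' i s ^ 2) volume 0 (2*π) := by
    intro i
    have heq : (fun s => g' i s ^ 2)
        = fun s => (fun s => Φ' s ^ 2) s * (U s i ^ 2)
          + Φ' s * (2 * U s i * (Φ s * deriv U s i))
          + (Φ s * deriv U s i) ^ 2 := funext fun s => by
      simp only [hg'def]; ring
    rw [heq]
    refine IntervalIntegrable.add (IntervalIntegrable.add ?_ ?_) ?_
    · exact hΦL2.mul_continuousOn ((hucont i).pow 2).continuousOn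
    · exact hΦ'int.mul_continuousOn
        ((continuous_const.mul (hucont i)).mul (hΦc.mul (hu'cont i))).continuousOn
    · exact ((hΦc.mul (hu'cont i)).pow 2).intervalIntegrable _ _
  have hgsq_cont : ∀ i, Continuous (fun s => g i s ^ 2) := fun i =>
    ((hΦc.mul (hucont i)).pow 2)
  -- apply the scalar inequality to every component
  have hcomp : ∀ i : Fin 3,
      (1/4) * ∫ s in (0:ℝ)..(2*π), g i s ^ 2 ≤ ∫ s in (0:ℝ)..(2*π), g' i s ^ 2 := by
    intro i
    obtain ⟨s₀, hs₀, hzero⟩ := hvanish i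
    refine scalar_wirtinger (g i) (g' i) ?_ (hgd i) (hg'sq_int i) s₀ hs₀ ?_
    · intro s
      have h1 := hΦper s
      have h2 : U (s + 2*π) i = U s i := by rw [hUper s]
      simp only [hgdef]
      rw [h1, h2]
    · simp only [hgdef]
      rw [hzero, mul_zero]
  -- sum up
  have hsum_le := Finset.sum_le_sum fun i (_ : i ∈ Finset.univ) => hcomp i
  have hL : ∑ i : Fin 3, ∫ s in (0:ℝ)..(2*π), g' i s ^ 2
      = ∫ s in (0:ℝ)..(2*π), ((Φ' s) ^ 2 + (κ s) ^ 2 * (Φ s) ^ 2) := by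
    rw [← intervalIntegral.integral_finset_sum fun i _ => hg'sq_int i]
    apply intervalIntegral.integral_congr
    intro s _
    calc ∑ i : Fin 3, g' i s ^ 2
        = ∑ i : Fin 3, (Φ' s ^ 2 * (U s i) ^ 2
            + (2 * Φ' s * Φ s) * (U s i * deriv U s i)
            + Φ s ^ 2 * (deriv U s i) ^ 2) := by
          apply Finset.sum_congr rfl
          intro i _
          simp only [hg'def]
          ring
      _ = Φ' s ^ 2 * (∑ i : Fin 3, (U s i) ^ 2)
            + (2 * Φ' s * Φ s) * (∑ i : Fin 3, U s i * deriv U s i)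
            + Φ s ^ 2 * (∑ i : Fin 3, (deriv U s i) ^ 2) := by
          rw [Finset.sum_add_distrib, Finset.sum_add_distrib,
            ← Finset.mul_sum, ← Finset.mul_sum, ← Finset.mul_sum]
      _ = (Φ' s) ^ 2 + (κ s) ^ 2 * (Φ s) ^ 2 := by
          rw [hsum1, hsum2, hsum3]
          ring
  have hR : ∑ i : Fin 3, ∫ s in (0:ℝ)..(2*π), g i s ^ 2
      = ∫ s in (0:ℝ)..(2*π), (Φ s) ^ 2 := by
    rw [← intervalIntegral.integral_finset_sum fun i _ =>
      ((hgsq_cont i).intervalIntegrable 0 (2*π))]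
    apply intervalIntegral.integral_congr
    intro s _
    calc ∑ i : Fin 3, g i s ^ 2
        = ∑ i : Fin 3, Φ s ^ 2 * (U s i) ^ 2 := by
          apply Finset.sum_congr rfl
          intro i _
          simp only [hgdef]
          ring
      _ = Φ s ^ 2 * ∑ i : Fin 3, (U s i) ^ 2 := by rw [← Finset.mul_sum]
      _ = (Φ s) ^ 2 := by rw [hsum1]; ring
  have hfinal : ∑ i : Fin 3, (1/4) * ∫ s in (0:ℝ)..(2*π), g i s ^ 2
      = (1/4) * ∫ s in (0:ℝ)..(2*π), (Φ s) ^ 2 := by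
    rw [← Finset.mul_sum, hR]
  rw [ge_iff_le, ← hL, ← hfinal]
  exact hsum_le
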